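/- Second derivative increment bound (inequality (4.7) in the proof of Proposition 4.6): Let 1 ≤ l ≤ d be integers and p₁ ∈ (0,1). Write points of ℝ^d as (w,x,y) with w ∈ ℝ, x ∈ ℝ^{l−1}, y ∈ ℝ^{d−l}. Let u : ℝ^{d−l} → [0,∞) be continuous, γ, β ≥ 0, and let L : ℝ^d → ℝ be twice continuously differentiable with |L(w,x,y)| ≤ u(y), |∂₁ L(w,x,y)| ≤ (1 + ‖(w,x)‖^{γ}) u(y) and |∂²₁₁ L(w,x,y)| ≤ (1 + ‖(w,x)‖^{β}) u(y) for all (w,x,y), where ‖·‖ is the maximum norm. Define g(w,x,y) := |w|^{p₁} L(w,x,y). Then there exist constants K > 0 and h′ ≥ 0 such that for all w ≠ 0, all z ∈ ℝ with |z| ≤ |w|/2, all x ∈ ℝ^{l−1} and y ∈ ℝ^{d−l}: |∂₁ g(w+z,x,y) − ∂₁ g(w,x,y)| ≤ K u(y) |z| (1 + ‖(w,x)‖^{h′} + |z|^{h′}) (1 + |w|^{p₁−2}). -/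

import Mathlib

open Filter Topology

set_option maxHeartbeats 1000000


lemma abs_real_sign_le_one (t : ℝ) : |Real.sign t| ≤ 1 := by
  rcases lt_trichotomy t 0 with h | h | h
  · rw [Real.sign_of_neg h]; norm_num
  · rw [h, Real.sign_zero]; norm_num
  · rw [Real.sign_of_pos h]; norm_num

lemma abs_mul_le' {x y X Y : ℝ} (hx : |x| ≤ X) (hy : |y| ≤ Y) : |x * y| ≤ X * Y := by
  rw [abs_mul]
  exact mul_le_mul hx hy (abs_nonneg y) ((abs_nonneg x).trans hx)

lemma myHasDerivAt_abs_rpow (q : ℝ) {t : ℝ} (ht : t ≠ 0) :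
    HasDerivAt (fun a : ℝ => |a| ^ q) (q * |t| ^ (q - 1) * Real.sign t) t := by
  rcases ht.lt_or_gt with h | h
  · have hne : (-t : ℝ) ≠ 0 := neg_ne_zero.mpr ht
    have h1 : HasDerivAt (fun a : ℝ => (-a) ^ q) ((q * (-t) ^ (q - 1)) * (-1)) t :=
      (Real.hasDerivAt_rpow_const (Or.inl hne)).comp t (hasDerivAt_neg t)
    have h2 : HasDerivAt (fun a : ℝ => |a| ^ q) ((q * (-t) ^ (q - 1)) * (-1)) t := by
      refine h1.congr_of_eventuallyEq ?_
      filter_upwards [isOpen_Iio.eventually_mem (show t ∈ Set.Iio (0:ℝ) from h)] with a ha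
      rw [abs_of_neg ha]
    convert h2 using 1
    rw [abs_of_neg h, Real.sign_of_neg h]; try ring
  · have h2 : HasDerivAt (fun a : ℝ => |a| ^ q) (q * t ^ (q - 1)) t := by
      refine (Real.hasDerivAt_rpow_const (Or.inl h.ne')).congr_of_eventuallyEq ?_
      filter_upwards [isOpen_Ioi.eventually_mem (show t ∈ Set.Ioi (0:ℝ) from h)] with a ha
      rw [abs_of_pos ha]
    convert h2 using 1
    rw [abs_of_pos h, Real.sign_of_pos h]; try ring

lemma myHasDerivAt_abs_rpow_sign (q : ℝ) {t : ℝ} (ht : t ≠ 0) :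
    HasDerivAt (fun a : ℝ => |a| ^ q * Real.sign a) (q * |t| ^ (q - 1)) t := by
  rcases ht.lt_or_gt with h | h
  · have hne : (-t : ℝ) ≠ 0 := neg_ne_zero.mpr ht
    have h1 : HasDerivAt (fun a : ℝ => ((-a) ^ q) * (-1)) (((q * (-t) ^ (q - 1)) * (-1)) * (-1)) t :=
      (((Real.hasDerivAt_rpow_const (Or.inl hne)).comp t (hasDerivAt_neg t))).mul_const (-1)
    have h2 : HasDerivAt (fun a : ℝ => |a| ^ q * Real.sign a) (((q * (-t) ^ (q - 1)) * (-1)) * (-1)) t := by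
      refine h1.congr_of_eventuallyEq ?_
      filter_upwards [isOpen_Iio.eventually_mem (show t ∈ Set.Iio (0:ℝ) from h)] with a ha
      rw [abs_of_neg ha, Real.sign_of_neg ha]
    convert h2 using 1
    rw [abs_of_neg h]; try ring
  · have h2 : HasDerivAt (fun a : ℝ => |a| ^ q * Real.sign a) ((q * t ^ (q - 1)) * 1) t := by
      refine ((Real.hasDerivAt_rpow_const (Or.inl h.ne')).mul_const 1).congr_of_eventuallyEq ?_
      filter_upwards [isOpen_Ioi.eventually_mem (show t ∈ Set.Ioi (0:ℝ) from h)] with a ha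
      rw [abs_of_pos ha, Real.sign_of_pos ha]
    convert h2 using 1
    rw [abs_of_pos h]; try ring


/-- Splice `w ∈ ℝ`, `x ∈ ℝ^{l−1}` and `y ∈ ℝ^{d−l}` into a point `(w,x,y)` of `ℝ^d`. -/
lemma arith_final {P U M S G B Mγ Mβ : ℝ} (hP : 0 < P) (hU : 0 ≤ U)
    (hG : 0 < G) (hB : 0 < B)
    (hS1 : 1 ≤ S) (c1 : M ≤ S) (c2 : M * Mγ ≤ S) (c3 : M ^ 2 ≤ S) (c4 : M ^ 2 * Mβ ≤ S) :
    1 * (1 * (4 * P)) * U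
        + 1 * (6 * (M * P) * 1) * ((1 + G * Mγ) * U)
        + (1 * (6 * (M * P)) * 1 * ((1 + G * Mγ) * U)
          + 9 * (M ^ 2 * P) * ((1 + B * Mβ) * U)) ≤ 25 * (1 + G + B) * U * P * S := by
  nlinarith [mul_nonneg (mul_nonneg hP.le hU) (sub_nonneg.2 c1),
    mul_nonneg (mul_nonneg hP.le hU) (sub_nonneg.2 hS1),
    mul_nonneg (mul_nonneg (mul_nonneg hG.le hP.le) hU) (sub_nonneg.2 c2),
    mul_nonneg (mul_nonneg hP.le hU) (sub_nonneg.2 c3),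
    mul_nonneg (mul_nonneg (mul_nonneg hB.le hP.le) hU) (sub_nonneg.2 c4),
    mul_nonneg (mul_nonneg (mul_nonneg hG.le hP.le) hU) (by linarith : (0:ℝ) ≤ S),
    mul_nonneg (mul_nonneg (mul_nonneg hB.le hP.le) hU) (by linarith : (0:ℝ) ≤ S)]

lemma arith_final2 {K U P S Z Zh : ℝ} (hK : 0 ≤ K) (hU : 0 ≤ U) (hZ : 0 ≤ Z)
    (hZh : 0 ≤ Zh) (hP : 0 ≤ P) (hS : 1 ≤ S) :
    (K * U * P * S) * Z ≤ K * U * Z * (S + Zh) * (1 + P) := by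
  nlinarith [mul_nonneg (mul_nonneg (mul_nonneg hK hU) hZ) (mul_nonneg (by linarith : (0:ℝ) ≤ S) hP),
    mul_nonneg (mul_nonneg (mul_nonneg hK hU) hZ) hZh,
    mul_nonneg (mul_nonneg (mul_nonneg (mul_nonneg hK hU) hZ) hZh) hP,
    mul_nonneg (mul_nonneg (mul_nonneg hK hU) hZ) (by linarith : (0:ℝ) ≤ S)]

def splice3 (d l : ℕ) (hl : 1 ≤ l) (hld : l ≤ d) (w : ℝ)
    (x : Fin (l - 1) → ℝ) (y : Fin (d - l) → ℝ) : Fin d → ℝ :=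
  fun j =>
    if h0 : (j : ℕ) = 0 then w
    else if h : (j : ℕ) < l then x ⟨(j : ℕ) - 1, by omega⟩
    else y ⟨(j : ℕ) - l, by have := j.isLt; omega⟩

/-- **Second derivative increment bound (inequality (4.7) in the proof of Proposition 4.6)**:
for `g(w,x,y) = |w|^{p₁} L(w,x,y)` with `|L| ≤ u(y)`, `|∂₁L| ≤ (1+‖(w,x)‖^γ)u(y)` and
`|∂²₁₁L| ≤ (1+‖(w,x)‖^β)u(y)`, there are `K > 0` and `h' ≥ 0` such that for `w ≠ 0` and
`|z| ≤ |w|/2`,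
`|∂₁g(w+z,x,y) − ∂₁g(w,x,y)| ≤ K u(y) |z| (1 + ‖(w,x)‖^{h'} + |z|^{h'})(1 + |w|^{p₁−2})`,
where `‖(w,x)‖ = max |w| ‖x‖` is the maximum norm. -/
theorem stmt11 (d l : ℕ) (hl : 1 ≤ l) (hld : l ≤ d)
    (p₁ : ℝ) (hp₁ : p₁ ∈ Set.Ioo (0:ℝ) 1)
    (u : (Fin (d - l) → ℝ) → ℝ) (hu_cont : Continuous u) (hu_nonneg : ∀ y, 0 ≤ u y)
    (γ β : ℝ) (hγ : 0 ≤ γ) (hβ : 0 ≤ β)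
    (L : (Fin d → ℝ) → ℝ) (hL : ContDiff ℝ 2 L)
    (hLbound : ∀ (w : ℝ) (x : Fin (l - 1) → ℝ) (y : Fin (d - l) → ℝ),
      |L (splice3 d l hl hld w x y)| ≤ u y)
    (hDbound : ∀ (w : ℝ) (x : Fin (l - 1) → ℝ) (y : Fin (d - l) → ℝ),
      |fderiv ℝ L (splice3 d l hl hld w x y) (Pi.single (⟨0, by omega⟩ : Fin d) 1)| ≤
        (1 + (max |w| ‖x‖) ^ γ) * u y)
    (hD2bound : ∀ (w : ℝ) (x : Fin (l - 1) → ℝ) (y : Fin (d - l) → ℝ),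
      |fderiv ℝ (fun v => fderiv ℝ L v (Pi.single (⟨0, by omega⟩ : Fin d) 1))
          (splice3 d l hl hld w x y) (Pi.single (⟨0, by omega⟩ : Fin d) 1)| ≤
        (1 + (max |w| ‖x‖) ^ β) * u y) :
    ∃ K h' : ℝ, 0 < K ∧ 0 ≤ h' ∧
      ∀ (w : ℝ), w ≠ 0 → ∀ (z : ℝ), |z| ≤ |w| / 2 →
        ∀ (x : Fin (l - 1) → ℝ) (y : Fin (d - l) → ℝ),
          |deriv (fun w' : ℝ => |w'| ^ p₁ * L (splice3 d l hl hld w' x y)) (w + z) -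
            deriv (fun w' : ℝ => |w'| ^ p₁ * L (splice3 d l hl hld w' x y)) w| ≤
          K * u y * |z| * (1 + (max |w| ‖x‖) ^ h' + |z| ^ h') * (1 + |w| ^ (p₁ - 2)) := by
  obtain ⟨hp0, hp1⟩ := hp₁
  refine ⟨25 * (1 + (2:ℝ) ^ γ + (2:ℝ) ^ β), γ + β + 2, by positivity, by positivity, ?_⟩
  intro w hw z hz x y
  set e₀ : Fin d → ℝ := Pi.single (⟨0, by omega⟩ : Fin d) 1 with he₀
  -- the path `a`
  have haeq : ∀ t : ℝ, splice3 d l hl hld t x y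
      = splice3 d l hl hld 0 x y + t • e₀ := by
    intro t
    funext j
    by_cases h0 : (j : ℕ) = 0
    · have hj : j = (⟨0, by omega⟩ : Fin d) := by ext; exact h0
      rw [hj]
      simp [splice3, he₀]
    · have hne : j ≠ (⟨0, by omega⟩ : Fin d) := by
        intro h; apply h0; rw [h]
      simp [splice3, h0, he₀, Pi.single_eq_of_ne hne]
  set ℓ : ℝ → ℝ := fun t => L (splice3 d l hl hld t x y) with hℓdef
  set ℓ₁ : ℝ → ℝ := fun t => fderiv ℝ L (splice3 d l hl hld t x y) e₀ with hℓ₁def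
  set ℓ₂ : ℝ → ℝ := fun t =>
    fderiv ℝ (fun v => fderiv ℝ L v e₀) (splice3 d l hl hld t x y) e₀ with hℓ₂def
  have ha : ∀ t : ℝ, HasDerivAt (fun s : ℝ => splice3 d l hl hld s x y) e₀ t := by
    intro t
    have : HasDerivAt (fun s : ℝ => splice3 d l hl hld 0 x y + s • e₀) e₀ t := by
      simpa using ((hasDerivAt_id t).smul_const e₀).const_add (splice3 d l hl hld 0 x y)
    refine this.congr_of_eventuallyEq ?_
    filter_upwards with s
    rw [haeq s]
  have hℓ : ∀ t : ℝ, HasDerivAt ℓ (ℓ₁ t) t := by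
    intro t
    exact ((hL.differentiable (by norm_num)) _).hasFDerivAt.comp_hasDerivAt t (ha t)
  have hℓ₁ : ∀ t : ℝ, HasDerivAt ℓ₁ (ℓ₂ t) t := by
    intro t
    have hF : Differentiable ℝ (fun v => fderiv ℝ L v e₀) := by
      have h1 : ContDiff ℝ 1 (fderiv ℝ L) := hL.fderiv_right (by norm_num)
      exact (h1.clm_apply contDiff_const).differentiable one_ne_zero
    exact (hF _).hasFDerivAt.comp_hasDerivAt t (ha t)
  have hb0 : ∀ t : ℝ, |ℓ t| ≤ u y := fun t => hLbound t x y
  have hb1 : ∀ t : ℝ, |ℓ₁ t| ≤ (1 + (max |t| ‖x‖) ^ γ) * u y := fun t => hDbound t x y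
  have hb2 : ∀ t : ℝ, |ℓ₂ t| ≤ (1 + (max |t| ‖x‖) ^ β) * u y := fun t => hD2bound t x y
  -- the first derivative function φ
  set φ : ℝ → ℝ := fun t =>
    p₁ * |t| ^ (p₁ - 1) * Real.sign t * ℓ t + |t| ^ p₁ * ℓ₁ t with hφdef
  have hg : ∀ t : ℝ, t ≠ 0 →
      HasDerivAt (fun w' : ℝ => |w'| ^ p₁ * ℓ w') (φ t) t := by
    intro t ht
    exact (myHasDerivAt_abs_rpow p₁ ht).mul (hℓ t)
  have hgderiv : ∀ t : ℝ, t ≠ 0 →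
      deriv (fun w' : ℝ => |w'| ^ p₁ * L (splice3 d l hl hld w' x y)) t = φ t := by
    intro t ht
    exact (hg t ht).deriv
  -- second derivative of g = derivative of φ
  have hψ : ∀ t : ℝ, t ≠ 0 → HasDerivAt φ
      ((p₁ * ((p₁ - 1) * |t| ^ (p₁ - 1 - 1)) * ℓ t
          + p₁ * (|t| ^ (p₁ - 1) * Real.sign t) * ℓ₁ t)
        + (p₁ * |t| ^ (p₁ - 1) * Real.sign t * ℓ₁ t + |t| ^ p₁ * ℓ₂ t)) t := by
    intro t ht
    have h2 := ((myHasDerivAt_abs_rpow_sign (p₁ - 1) ht).const_mul p₁).mul (hℓ t)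
    have h3 := (myHasDerivAt_abs_rpow p₁ ht).mul (hℓ₁ t)
    have h4 := h2.add h3
    have hfun : (fun t : ℝ => p₁ * (|t| ^ (p₁ - 1) * Real.sign t) * ℓ t + |t| ^ p₁ * ℓ₁ t)
        = φ := by
      funext s; rw [hφdef]; ring
    rw [← hfun]
    exact h4
  -- main estimates
  have hw' : (0:ℝ) < |w| := abs_pos.mpr hw
  set M : ℝ := max |w| ‖x‖ with hMdef
  have hM0 : 0 < M := lt_of_lt_of_le hw' (le_max_left _ _)
  have hwM : |w| ≤ M := le_max_left _ _
  have hxM : ‖x‖ ≤ M := le_max_right _ _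
  set P : ℝ := |w| ^ (p₁ - 2) with hPdef
  have hP : 0 < P := Real.rpow_pos_of_pos hw' _
  set h' : ℝ := γ + β + 2 with hh'def
  set S : ℝ := 1 + M ^ h' with hSdef
  have hS1 : (1:ℝ) ≤ S := by
    have := Real.rpow_nonneg hM0.le h'
    rw [hSdef]; linarith
  have habsorb : ∀ c : ℝ, 0 ≤ c → c ≤ h' → M ^ c ≤ S := by
    intro c hc hch
    rcases le_total M 1 with h | h
    · exact (Real.rpow_le_one hM0.le h hc).trans hS1
    · have : M ^ c ≤ M ^ h' := Real.rpow_le_rpow_of_exponent_le h hch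
      have h2 : (0:ℝ) ≤ M ^ h' := Real.rpow_nonneg hM0.le h'
      rw [hSdef]; linarith
  set U : ℝ := u y with hUdef
  have hU : 0 ≤ U := hu_nonneg y
  set G : ℝ := (2:ℝ) ^ γ with hGdef
  set B : ℝ := (2:ℝ) ^ β with hBdef
  have hG : 0 < G := Real.rpow_pos_of_pos (by norm_num) _
  have hB : 0 < B := Real.rpow_pos_of_pos (by norm_num) _
  set K : ℝ := 25 * (1 + G + B) with hKdef
  have hK : 0 < K := by positivity
  clear_value e₀ ℓ ℓ₁ ℓ₂ φ M P h' S U G B K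
  -- segment facts
  set s : Set ℝ := segment ℝ w (w + z) with hsdef
  have hseg : ∀ t ∈ s, |t - w| ≤ |z| := by
    rintro t ⟨a', b', ha', hb', hab, rfl⟩
    have : a' • w + b' • (w + z) - w = b' * z := by
      simp only [smul_eq_mul]; linear_combination w * hab
    rw [this, abs_mul, abs_of_nonneg hb']
    nlinarith [abs_nonneg z, hab]
  have hlow : ∀ t ∈ s, |w| / 2 ≤ |t| := by
    intro t ht
    have h1 := hseg t ht
    have h2 := abs_sub_abs_le_abs_sub w t
    rw [abs_sub_comm w t] at h2
    linarith
  have hup : ∀ t ∈ s, |t| ≤ 3 / 2 * |w| := by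
    intro t ht
    have h1 := hseg t ht
    have h2 := abs_sub_abs_le_abs_sub t w
    linarith
  have hne0 : ∀ t ∈ s, t ≠ 0 := by
    intro t ht
    have : 0 < |t| := lt_of_lt_of_le (by linarith) (hlow t ht)
    exact abs_pos.mp this
  -- pointwise bounds on the segment
  have htwo4 : (2:ℝ) ^ (2 - p₁) ≤ 4 := by
    have h1 : (2:ℝ) ^ (2 - p₁) ≤ (2:ℝ) ^ (2:ℝ) :=
      Real.rpow_le_rpow_of_exponent_le one_le_two (by linarith)
    have h2 : (2:ℝ) ^ (2:ℝ) = 4 := by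
      rw [show (2:ℝ) = ((2:ℕ):ℝ) from by norm_num, Real.rpow_natCast]; norm_num
    linarith
  have key : ∀ t ∈ s, ‖(p₁ * ((p₁ - 1) * |t| ^ (p₁ - 1 - 1)) * ℓ t
          + p₁ * (|t| ^ (p₁ - 1) * Real.sign t) * ℓ₁ t)
        + (p₁ * |t| ^ (p₁ - 1) * Real.sign t * ℓ₁ t + |t| ^ p₁ * ℓ₂ t)‖ ≤ K * U * P * S := by
    intro t ht
    have h1 := hlow t ht
    have h2 := hup t ht
    have ht0 : (0:ℝ) < |t| := lt_of_lt_of_le (by linarith) h1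
    -- A1
    have A1 : |t| ^ (p₁ - 2) ≤ 4 * P := by
      have s1 : |t| ^ (p₁ - 2) ≤ (|w| / 2) ^ (p₁ - 2) :=
        Real.rpow_le_rpow_of_nonpos (by positivity) h1 (by linarith)
      have s2 : (|w| / 2) ^ (p₁ - 2) = P * (2:ℝ) ^ (2 - p₁) := by
        rw [div_eq_mul_inv, Real.mul_rpow (abs_nonneg w) (by norm_num),
          Real.inv_rpow (by norm_num), ← Real.rpow_neg (by norm_num),
          show -(p₁ - 2) = 2 - p₁ from by ring, hPdef]
      have s3 : P * (2:ℝ) ^ (2 - p₁) ≤ P * 4 :=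
        mul_le_mul_of_nonneg_left htwo4 hP.le
      linarith
    -- A2
    have A2 : |t| ^ (p₁ - 1) ≤ 6 * (M * P) := by
      have e : |t| ^ (p₁ - 1) = |t| * |t| ^ (p₁ - 2) := by
        rw [show p₁ - 1 = 1 + (p₁ - 2) from by ring, Real.rpow_add ht0, Real.rpow_one]
      rw [e]
      calc |t| * |t| ^ (p₁ - 2) ≤ (3 / 2 * |w|) * (4 * P) :=
            mul_le_mul h2 A1 (Real.rpow_nonneg (abs_nonneg t) _) (by positivity)
        _ = 6 * (|w| * P) := by ring
        _ ≤ 6 * (M * P) := by linarith [mul_nonneg hP.le (sub_nonneg.2 hwM)]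
    -- A3
    have A3 : |t| ^ p₁ ≤ 9 * (M ^ 2 * P) := by
      have e : |t| ^ p₁ = |t| ^ (2:ℝ) * |t| ^ (p₁ - 2) := by
        rw [← Real.rpow_add ht0, show (2:ℝ) + (p₁ - 2) = p₁ from by ring]
      have e2 : |t| ^ (2:ℝ) = |t| ^ (2:ℕ) := by
        rw [show (2:ℝ) = ((2:ℕ):ℝ) from by norm_num, Real.rpow_natCast]
      rw [e, e2]
      have hsq : |t| ^ (2:ℕ) ≤ (3 / 2 * |w|) ^ (2:ℕ) :=
        pow_le_pow_left₀ (abs_nonneg t) h2 2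
      have hw2 : |w| ^ (2:ℕ) ≤ M ^ (2:ℕ) := pow_le_pow_left₀ (abs_nonneg w) hwM 2
      calc |t| ^ (2:ℕ) * |t| ^ (p₁ - 2) ≤ (3 / 2 * |w|) ^ (2:ℕ) * (4 * P) :=
            mul_le_mul hsq A1 (Real.rpow_nonneg (abs_nonneg t) _) (by positivity)
        _ = 9 * (|w| ^ (2:ℕ) * P) := by ring
        _ ≤ 9 * (M ^ 2 * P) := by linarith [mul_nonneg hP.le (sub_nonneg.2 hw2)]
    -- A4
    have hMt : max |t| ‖x‖ ≤ 2 * M := by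
      apply max_le
      · linarith [hwM]
      · linarith [hxM, hM0.le]
    have A4γ : (max |t| ‖x‖) ^ γ ≤ G * M ^ γ := by
      have h := Real.rpow_le_rpow (le_trans (abs_nonneg t) (le_max_left _ _)) hMt hγ
      rw [Real.mul_rpow (by norm_num) hM0.le] at h
      rw [hGdef]; exact h
    have A4β : (max |t| ‖x‖) ^ β ≤ B * M ^ β := by
      have h := Real.rpow_le_rpow (le_trans (abs_nonneg t) (le_max_left _ _)) hMt hβ
      rw [Real.mul_rpow (by norm_num) hM0.le] at h
      rw [hBdef]; exact h
    -- bounds on the four terms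
    have hV : |ℓ₁ t| ≤ (1 + G * M ^ γ) * U := by
      have h := hb1 t
      have hmul : (1 + (max |t| ‖x‖) ^ γ) * U ≤ (1 + G * M ^ γ) * U :=
        mul_le_mul_of_nonneg_right (by linarith) hU
      linarith
    have hW : |ℓ₂ t| ≤ (1 + B * M ^ β) * U := by
      have h := hb2 t
      have hmul : (1 + (max |t| ‖x‖) ^ β) * U ≤ (1 + B * M ^ β) * U :=
        mul_le_mul_of_nonneg_right (by linarith) hU
      linarith
    have hp₁abs : |p₁| ≤ 1 := by rw [abs_of_pos hp0]; linarith
    have hp₁'abs : |p₁ - 1| ≤ 1 := by rw [abs_of_neg (by linarith : p₁ - 1 < 0)]; linarith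
    have hXabs : ∀ q : ℝ, |(|t| ^ q)| = |t| ^ q :=
      fun q => abs_of_nonneg (Real.rpow_nonneg (abs_nonneg t) q)
    have hsgn := abs_real_sign_le_one t
    have e1 : |p₁ * ((p₁ - 1) * |t| ^ (p₁ - 1 - 1)) * ℓ t| ≤ 1 * (1 * (4 * P)) * U := by
      refine abs_mul_le' (abs_mul_le' hp₁abs (abs_mul_le' hp₁'abs ?_)) (hb0 t)
      rw [hXabs, show p₁ - 1 - 1 = p₁ - 2 from by ring]
      exact A1
    have e2 : |p₁ * (|t| ^ (p₁ - 1) * Real.sign t) * ℓ₁ t|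
        ≤ 1 * (6 * (M * P) * 1) * ((1 + G * M ^ γ) * U) := by
      refine abs_mul_le' (abs_mul_le' hp₁abs (abs_mul_le' ?_ hsgn)) hV
      rw [hXabs]; exact A2
    have e3 : |p₁ * |t| ^ (p₁ - 1) * Real.sign t * ℓ₁ t|
        ≤ 1 * (6 * (M * P)) * 1 * ((1 + G * M ^ γ) * U) := by
      refine abs_mul_le' (abs_mul_le' (abs_mul_le' hp₁abs ?_) hsgn) hV
      rw [hXabs]; exact A2
    have e4 : |(|t| ^ p₁ * ℓ₂ t)| ≤ 9 * (M ^ 2 * P) * ((1 + B * M ^ β) * U) := by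
      refine abs_mul_le' ?_ hW
      rw [hXabs]; exact A3
    rw [Real.norm_eq_abs]
    have habs : |(p₁ * ((p₁ - 1) * |t| ^ (p₁ - 1 - 1)) * ℓ t
          + p₁ * (|t| ^ (p₁ - 1) * Real.sign t) * ℓ₁ t)
        + (p₁ * |t| ^ (p₁ - 1) * Real.sign t * ℓ₁ t + |t| ^ p₁ * ℓ₂ t)|
        ≤ |p₁ * ((p₁ - 1) * |t| ^ (p₁ - 1 - 1)) * ℓ t|
          + |p₁ * (|t| ^ (p₁ - 1) * Real.sign t) * ℓ₁ t|
          + (|p₁ * |t| ^ (p₁ - 1) * Real.sign t * ℓ₁ t| + |(|t| ^ p₁ * ℓ₂ t)|) :=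
      (abs_add_le _ _).trans (add_le_add (abs_add_le _ _) (abs_add_le _ _))
    -- absorption facts
    have c1 : M ≤ S := by
      have := habsorb 1 (by norm_num) (by rw [hh'def]; linarith)
      rwa [Real.rpow_one] at this
    have c2 : M * M ^ γ ≤ S := by
      have := habsorb (1 + γ) (by linarith) (by rw [hh'def]; linarith)
      rwa [Real.rpow_add hM0, Real.rpow_one] at this
    have c3 : M ^ 2 ≤ S := by
      have := habsorb 2 (by norm_num) (by rw [hh'def]; linarith)
      rwa [show (2:ℝ) = ((2:ℕ):ℝ) from by norm_num, Real.rpow_natCast] at this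
    have c4 : M ^ 2 * M ^ β ≤ S := by
      have := habsorb (2 + β) (by linarith) (by rw [hh'def]; linarith)
      rwa [Real.rpow_add hM0, show (2:ℝ) = ((2:ℕ):ℝ) from by norm_num,
        Real.rpow_natCast] at this
    have hMγ : (0:ℝ) ≤ M ^ γ := Real.rpow_nonneg hM0.le γ
    have hMβ : (0:ℝ) ≤ M ^ β := Real.rpow_nonneg hM0.le β
    have final : 1 * (1 * (4 * P)) * U
        + 1 * (6 * (M * P) * 1) * ((1 + G * M ^ γ) * U)
        + (1 * (6 * (M * P)) * 1 * ((1 + G * M ^ γ) * U)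
          + 9 * (M ^ 2 * P) * ((1 + B * M ^ β) * U)) ≤ K * U * P * S := by
      rw [hKdef]
      exact arith_final hP hU hG hB hS1 c1 c2 c3 c4
    linarith [habs, e1, e2, e3, e4]
  -- mean value inequality
  have hwmem : w ∈ s := left_mem_segment ℝ w (w + z)
  have hwzmem : w + z ∈ s := right_mem_segment ℝ w (w + z)
  have hwz0 : w + z ≠ 0 := hne0 _ hwzmem
  have mvt : ‖φ (w + z) - φ w‖ ≤ (K * U * P * S) * ‖(w + z) - w‖ := by
    refine Convex.norm_image_sub_le_of_norm_hasDerivWithin_le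
      (fun t ht => ((hψ t (hne0 t ht)).hasDerivWithinAt)) key (convex_segment _ _)
      hwmem hwzmem
  rw [hgderiv (w + z) hwz0, hgderiv w hw]
  have hz' : ‖(w + z) - w‖ = |z| := by
    rw [Real.norm_eq_abs, add_sub_cancel_left]
  rw [Real.norm_eq_abs] at mvt
  rw [hz'] at mvt
  have hZh : (0:ℝ) ≤ |z| ^ h' := Real.rpow_nonneg (abs_nonneg z) h'
  have hzabs : (0:ℝ) ≤ |z| := abs_nonneg z
  have final2 : (K * U * P * S) * |z| ≤ K * U * |z| * (S + |z| ^ h') * (1 + P) :=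
    arith_final2 hK.le hU hzabs hZh hP.le hS1
  calc |φ (w + z) - φ w| ≤ (K * U * P * S) * |z| := mvt
    _ ≤ K * U * |z| * (S + |z| ^ h') * (1 + P) := final2
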